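/- Let L = {1ⁿ : n ∈ ℕ} ∪ {0ⁿ : n ∈ ℕ} ⊆ {0,1}* (this includes the empty word). Then the isometry group Isom_2(L) of L with respect to lev_2 = lev_{1,2} is isomorphic to the infinite dihedral group D_∞, and it acts transitively on L. -/

import Mathlib

/-! Port note: `Mathlib.Data.List.EditDistance` (which provided `Levenshtein.Cost` and
`levenshtein`) is no longer in Mathlib; its definitions are reproduced here with their
original meaning. -/

structure Levenshtein.Cost (α β δ : Type*) where
  delete : α → δ
  insert : β → δ
  substitute : α → β → δ

namespace Levenshtein

def impl {α β δ : Type*} [AddZeroClass δ] [Min δ] (C : Cost α β δ)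
    (xs : List α) (y : β) (d : {r : List δ // 0 < r.length}) : {r : List δ // 0 < r.length} :=
  let ⟨ds, w⟩ := d
  xs.zip (ds.zip ds.tail) |>.foldr
    (init := ⟨[C.insert y + ds.getLast (List.ne_nil_of_length_pos w)], by simp⟩)
    (fun ⟨x, d₀, d₁⟩ ⟨r, w⟩ =>
      ⟨min (C.delete x + r[0]) (min (C.insert y + d₀) (C.substitute x y + d₁)) :: r, by simp⟩)

end Levenshtein

def suffixLevenshtein {α β δ : Type*} [AddZeroClass δ] [Min δ] (C : Levenshtein.Cost α β δ)
    (xs : List α) (ys : List β) : {r : List δ // 0 < r.length} :=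
  ys.foldr
    (Levenshtein.impl C xs)
    (xs.foldr (init := ⟨[0], by simp⟩) (fun a ⟨ds, w⟩ => ⟨(C.delete a + ds[0]) :: ds, by simp⟩))

def levenshtein {α β δ : Type*} [AddZeroClass δ] [Min δ] (C : Levenshtein.Cost α β δ)
    (xs : List α) (ys : List β) : δ :=
  let ⟨r, w⟩ := suffixLevenshtein C xs ys
  r[0]


/-- Cost structure for the generalized Levenshtein distance:
insertions and deletions cost `γ`, substitutions cost `θ`. -/
def levCost (A : Type*) [DecidableEq A] (γ θ : ℝ) : Levenshtein.Cost A A ℝ where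
  delete _ := γ
  insert _ := γ
  substitute a b := if a = b then 0 else θ

/-- The generalized Levenshtein distance `lev_{γ,θ}` between two words over `A`:
the minimal total cost of transforming one word into the other by insertions and
deletions (of cost `γ`) and substitutions (of cost `θ`). -/
def lev {A : Type*} [DecidableEq A] (γ θ : ℝ) (u v : List A) : ℝ :=
  levenshtein (levCost A γ θ) u v

/-- The isometry group of a language `L ⊆ A*` with respect to a distance `d` on `A*`:
the group (under composition) of bijections of `L` preserving `d`. -/
def IsomGroup {A : Type*} (d : List A → List A → ℝ) (L : Set (List A)) :
    Subgroup (Equiv.Perm L) where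
  carrier := {φ : Equiv.Perm L | ∀ u v : L, d (φ u) (φ v) = d u v}
  one_mem' := by intro u v; rfl
  mul_mem' := by intro φ ψ hφ hψ u v; simp only [Equiv.Perm.mul_apply]; rw [hφ, hψ]
  inv_mem' := by
    intro φ hφ u v
    have h := hφ (φ⁻¹ u) (φ⁻¹ v)
    simpa using h.symm


/-! ### Port helpers: lemmas from the former `Mathlib.Data.List.EditDistance` -/

section LevPort

open Levenshtein

theorem Levenshtein.impl_cons' {α β δ : Type*} [AddZeroClass δ] [Min δ] (C : Cost α β δ)
    (x : α) (xs : List α) (y : β) (d : δ) (ds : List δ) (w : 0 < (d :: ds).length)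
    (w' : 0 < List.length ds) :
    impl C (x :: xs) y ⟨d :: ds, w⟩ =
      let ⟨r, w⟩ := impl C xs y ⟨ds, w'⟩
      ⟨min (C.delete x + r[0]) (min (C.insert y + d) (C.substitute x y + ds[0])) :: r, by simp⟩ :=
  match ds, w' with | _ :: _, _ => rfl

theorem Levenshtein.impl_cons_fst_zero' {α β δ : Type*} [AddZeroClass δ] [Min δ]
    (C : Cost α β δ)
    (x : α) (xs : List α) (y : β) (d : δ) (ds : List δ) (w : 0 < (d :: ds).length)
    (h) (w' : 0 < List.length ds) :
    (impl C (x :: xs) y ⟨d :: ds, w⟩).1[0]'h =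
      let ⟨r, w⟩ := impl C xs y ⟨ds, w'⟩
      min (C.delete x + r[0]) (min (C.insert y + d) (C.substitute x y + ds[0])) :=
  match ds, w' with | _ :: _, _ => rfl

theorem Levenshtein.impl_length' {α β δ : Type*} [AddZeroClass δ] [Min δ] (C : Cost α β δ)
    (xs : List α) (y : β)
    (d : {r : List δ // 0 < r.length}) (w : d.1.length = xs.length + 1) :
    (impl C xs y d).1.length = xs.length + 1 := by
  induction xs generalizing d with
  | nil => rfl
  | cons x xs ih =>
    dsimp [impl]
    match d, w with
    | ⟨d₁ :: d₂ :: ds, _⟩, w =>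
      dsimp
      congr 1
      exact ih ⟨d₂ :: ds, (by simp)⟩ (by simpa using w)

theorem suffixLevenshtein_length' {α β δ : Type*} [AddZeroClass δ] [Min δ]
    (C : Levenshtein.Cost α β δ) (xs : List α) (ys : List β) :
    (suffixLevenshtein C xs ys).1.length = xs.length + 1 := by
  induction ys with
  | nil =>
    dsimp [suffixLevenshtein]
    induction xs with
    | nil => rfl
    | cons _ xs ih =>
      simp_all
  | cons y ys ih =>
    dsimp [suffixLevenshtein]
    rw [Levenshtein.impl_length']
    exact ih

theorem suffixLevenshtein_cons₁_aux' {δ : Type*} {x y : {r : List δ // 0 < r.length}}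
    (w₀ : x.1[0]'x.2 = y.1[0]'y.2) (w : x.1.tail = y.1.tail) : x = y := by
  match x, y with
  | ⟨hx :: tx, _⟩, ⟨hy :: ty, _⟩ => simp_all

theorem suffixLevenshtein_cons₁' {α β δ : Type*} [AddZeroClass δ] [Min δ]
    (C : Levenshtein.Cost α β δ) (x : α) (xs : List α) (ys : List β) :
    suffixLevenshtein C (x :: xs) ys =
      ⟨levenshtein C (x :: xs) ys ::
        (suffixLevenshtein C xs ys).1, by simp⟩ := by
  induction ys with
  | nil =>
    rfl
  | cons y ys ih =>
    apply suffixLevenshtein_cons₁_aux'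
    · rfl
    · show (impl C (x :: xs) y (suffixLevenshtein C (x :: xs) ys)).1.tail = _
      rw [ih, Levenshtein.impl_cons']
      · rfl
      · simp [suffixLevenshtein_length']

theorem levenshtein_nil_nil {α β δ : Type*} [AddZeroClass δ] [Min δ]
    {C : Levenshtein.Cost α β δ} : levenshtein C [] [] = 0 := rfl

theorem levenshtein_nil_cons {α β δ : Type*} [AddZeroClass δ] [Min δ]
    {C : Levenshtein.Cost α β δ} (y : β) (ys : List β) :
    levenshtein C [] (y :: ys) = C.insert y + levenshtein C [] ys := by
  have hl := suffixLevenshtein_length' C ([] : List α) ys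
  show (impl C [] y (suffixLevenshtein C [] ys)).1[0]'(by
      rw [Levenshtein.impl_length' C [] y _ hl]; simp) = C.insert y + (suffixLevenshtein C [] ys).1[0]'(by simp [hl])
  generalize suffixLevenshtein C [] ys = s at hl ⊢
  obtain ⟨r, w⟩ := s
  match r, w, hl with
  | [a], _, _ => rfl

theorem levenshtein_cons_nil {α β δ : Type*} [AddZeroClass δ] [Min δ]
    {C : Levenshtein.Cost α β δ} (x : α) (xs : List α) :
    levenshtein C (x :: xs) [] = C.delete x + levenshtein C xs [] :=
  rfl

theorem levenshtein_cons_cons {α β δ : Type*} [AddZeroClass δ] [Min δ]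
    {C : Levenshtein.Cost α β δ}
    (x : α) (xs : List α) (y : β) (ys : List β) :
    levenshtein C (x :: xs) (y :: ys) =
      min (C.delete x + levenshtein C xs (y :: ys))
        (min (C.insert y + levenshtein C (x :: xs) ys)
          (C.substitute x y + levenshtein C xs ys)) := by
  show (impl C (x :: xs) y (suffixLevenshtein C (x :: xs) ys)).1[0]'(by
      rw [Levenshtein.impl_length' C _ y _ (suffixLevenshtein_length' C _ ys)]; simp) = _
  simp only [suffixLevenshtein_cons₁']
  rw [Levenshtein.impl_cons_fst_zero']
  · rfl

end LevPort

/-! ### Auxiliary development -/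

section Stmt6Aux

lemma lev_nil_rep (b : Bool) (n : ℕ) : lev 1 2 [] (List.replicate n b) = n := by
  induction n with
  | zero => simp [lev, levenshtein_nil_nil]
  | succ n ih =>
    rw [List.replicate_succ, lev, levenshtein_nil_cons]
    rw [lev] at ih
    rw [ih]
    show (1 : ℝ) + n = _
    push_cast; ring

lemma lev_rep_nil (a : Bool) (m : ℕ) : lev 1 2 (List.replicate m a) [] = m := by
  induction m with
  | zero => simp [lev, levenshtein_nil_nil]
  | succ m ih =>
    rw [List.replicate_succ, lev, levenshtein_cons_nil]
    rw [lev] at ih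
    rw [ih]
    show (1 : ℝ) + m = _
    push_cast; ring

lemma abs_aux1 (x y : ℝ) : |x - y| ≤ 1 + |x - (y + 1)| := by
  have h : x - y = (x - (y + 1)) + 1 := by ring
  rw [h]
  calc |(x - (y+1)) + 1| ≤ |x - (y+1)| + |(1:ℝ)| := abs_add_le _ _
  _ = 1 + |x - (y+1)| := by rw [abs_one]; ring

lemma abs_aux2 (x y : ℝ) : |x - y| ≤ 1 + |(x + 1) - y| := by
  have h : x - y = ((x + 1) - y) + (-1) := by ring
  rw [h]
  calc |((x+1) - y) + (-1)| ≤ |(x+1) - y| + |(-1:ℝ)| := abs_add_le _ _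
  _ = 1 + |(x+1) - y| := by rw [abs_neg, abs_one]; ring

lemma min3 {x y z : ℝ} (h1 : z ≤ x) (h2 : z ≤ y) : min x (min y z) = z := by
  rw [min_eq_right h2, min_eq_right h1]

lemma lev_rep (a : Bool) (m : ℕ) : ∀ (b : Bool) (n : ℕ),
    lev 1 2 (List.replicate m a) (List.replicate n b) =
      if a = b then |(m : ℝ) - n| else (m : ℝ) + n := by
  induction m with
  | zero =>
    intro b n
    have h := lev_nil_rep b n
    simp only [List.replicate_zero] at *
    rw [h]
    split
    · rw [Nat.cast_zero, zero_sub, abs_neg, abs_of_nonneg (by positivity)]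
    · rw [Nat.cast_zero, zero_add]
  | succ m ih =>
    intro b n
    induction n with
    | zero =>
      have h := lev_rep_nil a (m+1)
      simp only [List.replicate_zero] at *
      rw [h]
      split
      · rw [Nat.cast_zero, sub_zero, abs_of_nonneg (by positivity)]
      · rw [Nat.cast_zero, add_zero]
    | succ n ihn =>
      rw [List.replicate_succ, List.replicate_succ (a := b), lev, levenshtein_cons_cons]
      have h1 : levenshtein (levCost Bool 1 2) (List.replicate m a) (b :: List.replicate n b)
          = if a = b then |(m : ℝ) - ((n:ℝ)+1)| else (m : ℝ) + ((n:ℝ)+1) := by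
        have h := ih b (n+1); rw [lev, List.replicate_succ] at h; rw [h]; push_cast; ring_nf
      have h2 : levenshtein (levCost Bool 1 2) (a :: List.replicate m a) (List.replicate n b)
          = if a = b then |((m:ℝ) + 1) - n| else ((m : ℝ) + 1) + n := by
        have h := ihn; rw [lev, List.replicate_succ] at h; rw [h]; push_cast; ring_nf
      have h3 : levenshtein (levCost Bool 1 2) (List.replicate m a) (List.replicate n b)
          = if a = b then |(m : ℝ) - n| else (m : ℝ) + n := by
        have h := ih b n; rw [lev] at h; rw [h]
      rw [h1, h2, h3]
      show min ((levCost Bool 1 2).delete a + _) (min ((levCost Bool 1 2).insert b + _)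
        ((levCost Bool 1 2).substitute a b + _)) = _
      simp only [levCost]
      by_cases hab : a = b
      · simp only [if_pos hab]
        rw [zero_add, min3 (abs_aux1 _ _) (abs_aux2 _ _)]
        push_cast
        congr 1
        ring
      · simp only [if_neg hab]
        rw [min3 (by linarith) (by linarith)]
        push_cast; ring

/-- The language `{1ⁿ} ∪ {0ⁿ}`. -/
abbrev Lset : Set (List Bool) :=
  {w | ∃ n : ℕ, w = List.replicate n true} ∪ {w | ∃ n : ℕ, w = List.replicate n false}

def enc (w : List Bool) : ℤ := if false ∈ w then -(w.length : ℤ) else (w.length : ℤ)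

lemma enc_rep_true (n : ℕ) : enc (List.replicate n true) = n := by
  simp [enc, List.mem_replicate]

lemma enc_rep_false (n : ℕ) : enc (List.replicate n false) = -n := by
  rcases Nat.eq_zero_or_pos n with h | h
  · subst h; simp [enc]
  · have hn : n ≠ 0 := by omega
    simp [enc, List.mem_replicate, hn]

def dec (z : ℤ) : List Bool :=
  if 0 ≤ z then List.replicate z.toNat true else List.replicate (-z).toNat false

lemma dec_mem (z : ℤ) : dec z ∈ Lset := by
  unfold dec
  split
  · exact Or.inl ⟨z.toNat, rfl⟩
  · exact Or.inr ⟨(-z).toNat, rfl⟩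

/-- The canonical bijection of `L` with `ℤ`: `1ⁿ ↦ n`, `0ⁿ ↦ -n`. -/
def eL : ↥Lset ≃ ℤ where
  toFun u := enc u.1
  invFun z := ⟨dec z, dec_mem z⟩
  left_inv := by
    rintro ⟨w, hw⟩
    rcases hw with ⟨n, rfl⟩ | ⟨n, rfl⟩
    · refine Subtype.ext ?_
      simp only [enc_rep_true, dec]
      rw [if_pos (by positivity)]
      simp
    · refine Subtype.ext ?_
      simp only [enc_rep_false, dec]
      rcases Nat.eq_zero_or_pos n with h | h
      · subst h; simp
      · rw [if_neg (by omega), neg_neg]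
        simp
  right_inv := by
    intro z
    simp only [dec]
    split
    · rw [enc_rep_true]; omega
    · rw [enc_rep_false]; omega

lemma eL_apply (u : ↥Lset) : eL u = enc u.1 := rfl

/-- On `L`, the Levenshtein distance `lev 1 2` is the standard distance on `ℤ`
transported through `eL`. -/
lemma lev_eq (u v : ↥Lset) : lev 1 2 u.1 v.1 = ((|eL u - eL v| : ℤ) : ℝ) := by
  obtain ⟨w, hw⟩ := u
  obtain ⟨w', hw'⟩ := v
  have key : ∀ (a b : Bool) (m n : ℕ),
      lev 1 2 (List.replicate m a) (List.replicate n b) =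
        ((|(if a then (m:ℤ) else -m) - (if b then (n:ℤ) else -n)| : ℤ) : ℝ) := by
    intro a b m n
    rw [lev_rep]
    cases a <;> cases b <;> simp only [if_true, if_false, Bool.true_eq_false,
      Bool.false_eq_true, reduceIte]
    · rw [neg_sub_neg, abs_sub_comm]
      push_cast [Int.cast_abs]; ring_nf
    · rw [show -(m:ℤ) - n = -(m + n) from by ring, abs_neg,
        abs_of_nonneg (by positivity)]
      push_cast; ring
    · rw [sub_neg_eq_add, abs_of_nonneg (by positivity)]
      push_cast; ring
    · push_cast [Int.cast_abs]; ring_nf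
  rcases hw with ⟨m, rfl⟩ | ⟨m, rfl⟩ <;> rcases hw' with ⟨n, rfl⟩ | ⟨n, rfl⟩ <;>
    simp only [eL_apply, enc_rep_true, enc_rep_false] <;>
    first
      | (rw [key true true m n]; simp)
      | (rw [key true false m n]; simp)
      | (rw [key false true m n]; simp)
      | (rw [key false false m n]; simp)

/-- The isometry group of `ℤ` (with the standard metric), as a subgroup of `Perm ℤ`. -/
def ZIsom : Subgroup (Equiv.Perm ℤ) where
  carrier := {g : Equiv.Perm ℤ | ∀ x y : ℤ, |g x - g y| = |x - y|}
  one_mem' := by intro x y; rfl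
  mul_mem' := by intro g h hg hh x y; simp only [Equiv.Perm.mul_apply]; rw [hg, hh]
  inv_mem' := by
    intro g hg x y
    have h := hg (g⁻¹ x) (g⁻¹ y)
    simpa using h.symm

lemma zisom_classify {g : Equiv.Perm ℤ} (hg : g ∈ ZIsom) :
    (∀ x : ℤ, g x = x + g 0) ∨ (∀ x : ℤ, g x = g 0 - x) := by
  have h0 : ∀ x : ℤ, g x = g 0 + x ∨ g x = g 0 - x := by
    intro x
    have := hg x 0
    rw [show |x - 0| = |x| from by rw [sub_zero]] at this
    rcases abs_eq_abs.mp this with h | h <;> [left; right] <;> omega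
  rcases h0 1 with h1 | h1
  · left
    intro x
    rcases h0 x with h | h
    · omega
    · have := hg x 1
      rw [h, h1] at this
      rcases abs_eq_abs.mp this with h' | h' <;> omega
  · right
    intro x
    rcases h0 x with h | h
    · have := hg x 1
      rw [h, h1] at this
      rcases abs_eq_abs.mp this with h' | h' <;> omega
    · omega

lemma addRight_mem (a : ℤ) : (Equiv.addRight a : Equiv.Perm ℤ) ∈ ZIsom := by
  intro x y; simp

lemma subLeft_mem (a : ℤ) : (Equiv.subLeft a : Equiv.Perm ℤ) ∈ ZIsom := by
  intro x y
  simp only [Equiv.subLeft_apply]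
  rw [show a - x - (a - y) = -(x - y) from by ring, abs_neg]

def zid : ZMod 0 → ℤ := fun i => i

/-- The homomorphism from the infinite dihedral group to the isometry group of `ℤ`:
`r i` acts as translation by `i`, `sr i` acts as the reflection `x ↦ -i - x`. -/
def dihToZIsom : DihedralGroup 0 →* ↥ZIsom :=
  MonoidHom.mk'
    (fun d => match d with
      | .r i => ⟨Equiv.addRight (zid i), addRight_mem _⟩
      | .sr i => ⟨Equiv.subLeft (-(zid i)), subLeft_mem _⟩)
    (by
      rintro (i | i) (j | j) <;>
        simp only [DihedralGroup.r_mul_r, DihedralGroup.r_mul_sr,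
          DihedralGroup.sr_mul_r, DihedralGroup.sr_mul_sr] <;>
        refine Subtype.ext (Equiv.ext fun x => ?_) <;>
        simp only [Subgroup.coe_mul, Equiv.Perm.mul_apply, Equiv.coe_addRight,
          Equiv.subLeft_apply] <;>
        show _ = (_ : ℤ) <;>
        simp only [show ∀ a b : ZMod 0, zid (a + b) = zid a + zid b from fun _ _ => rfl,
          show ∀ a b : ZMod 0, zid (a - b) = zid a - zid b from fun _ _ => rfl] <;>
        ring)

lemma dihToZIsom_bij : Function.Bijective dihToZIsom := by
  constructor
  · intro d d' h
    have h0 := congrArg (fun g => (g : ↥ZIsom).1 0) h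
    have h1 := congrArg (fun g => (g : ↥ZIsom).1 1) h
    rcases d with i | i <;> rcases d' with i' | i' <;>
      simp only [dihToZIsom, MonoidHom.mk'_apply, Equiv.coe_addRight,
        Equiv.subLeft_apply] at h0 h1 <;>
      first
        | (exact congrArg _ (show zid _ = zid _ by omega))
        | (exfalso; omega)
  · rintro ⟨g, hg⟩
    rcases zisom_classify hg with h | h
    · refine ⟨.r (g 0), Subtype.ext (Equiv.ext fun x => ?_)⟩
      show x + zid (g 0) = g x
      rw [h x]; rfl
    · refine ⟨.sr (-(g 0)), Subtype.ext (Equiv.ext fun x => ?_)⟩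
      show (-(zid (-(g 0))) : ℤ) - x = g x
      rw [h x]
      show -(-(g 0)) - x = g 0 - x
      ring

noncomputable def zIsomEquivDih : ↥ZIsom ≃* DihedralGroup 0 :=
  (MulEquiv.ofBijective dihToZIsom dihToZIsom_bij).symm

/-- Conjugation by `eL` as a group isomorphism `Perm L ≃* Perm ℤ`. -/
def permE : Equiv.Perm ↥Lset ≃* Equiv.Perm ℤ :=
  { eL.permCongr with
    map_mul' := fun p q => by
      ext x
      simp [Equiv.permCongr_apply, Equiv.Perm.mul_apply] }

lemma permE_apply (φ : Equiv.Perm ↥Lset) (x : ℤ) :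
    permE φ x = eL (φ (eL.symm x)) := rfl

lemma mem_isom_iff (φ : Equiv.Perm ↥Lset) :
    φ ∈ IsomGroup (lev 1 2) Lset ↔ permE φ ∈ ZIsom := by
  constructor
  · intro hφ x y
    have h := hφ (eL.symm x) (eL.symm y)
    rw [lev_eq, lev_eq] at h
    have h' : |eL (φ (eL.symm x)) - eL (φ (eL.symm y))| = |eL (eL.symm x) - eL (eL.symm y)| :=
      Int.cast_injective h
    rwa [Equiv.apply_symm_apply, Equiv.apply_symm_apply] at h' 
  · intro hg u v
    rw [lev_eq, lev_eq]
    have h := hg (eL u) (eL v)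
    rw [permE_apply, permE_apply, Equiv.symm_apply_apply, Equiv.symm_apply_apply] at h
    exact congrArg _ h

lemma isom_map_eq : Subgroup.map (permE : Equiv.Perm ↥Lset ≃* Equiv.Perm ℤ).toMonoidHom
    (IsomGroup (lev 1 2) Lset) = ZIsom := by
  ext g
  constructor
  · rintro ⟨φ, hφ, rfl⟩
    exact (mem_isom_iff φ).mp hφ
  · intro hg
    refine ⟨permE.symm g, ?_, by simp⟩
    rw [SetLike.mem_coe, mem_isom_iff]
    simpa using hg

noncomputable def isomEquivDih : ↥(IsomGroup (lev 1 2) Lset) ≃* DihedralGroup 0 :=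
  ((permE.subgroupMap (IsomGroup (lev 1 2) Lset)).trans
    (MulEquiv.subgroupCongr isom_map_eq)).trans zIsomEquivDih

end Stmt6Aux

/-- Let `L = {1ⁿ : n ∈ ℕ} ∪ {0ⁿ : n ∈ ℕ} ⊆ {0,1}*` (including the empty
word). Then `Isom_2(L)` (w.r.t. `lev_2 = lev_{1,2}`) is isomorphic to the infinite dihedral
group and acts transitively on `L`. -/
theorem stmt_6 :
    Nonempty (IsomGroup (lev 1 2)
        ({w | ∃ n : ℕ, w = List.replicate n true} ∪ {w | ∃ n : ℕ, w = List.replicate n false})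
      ≃* DihedralGroup 0) ∧
    (∀ u v : ({w | ∃ n : ℕ, w = List.replicate n true} ∪
        {w | ∃ n : ℕ, w = List.replicate n false} : Set (List Bool)),
      ∃ φ ∈ IsomGroup (lev 1 2)
        ({w | ∃ n : ℕ, w = List.replicate n true} ∪ {w | ∃ n : ℕ, w = List.replicate n false}),
        φ u = v) := by
  constructor
  · exact ⟨isomEquivDih⟩
  · intro u v
    refine ⟨permE.symm (Equiv.addRight (eL v - eL u)), ?_, ?_⟩
    · rw [show permE.symm (Equiv.addRight (eL v - eL u)) ∈ IsomGroup (lev 1 2) Lset ↔ _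
        from mem_isom_iff _]
      simpa using addRight_mem (eL v - eL u)
    · have : permE.symm (Equiv.addRight (eL v - eL u)) u
          = eL.symm ((Equiv.addRight (eL v - eL u)) (eL u)) := rfl
      rw [this]
      simp
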